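/- arXiv:1911.11363 — 2 statements merged into one kernel-verified Lean document; each statement's English description precedes it below -/
import Mathlib

section
/- Suppose F: ℝ^p → ℝ is differentiable, β-smooth, and satisfies the expected-curvature condition: at each step t, E[⟨∇F(x_t), x_t − x*⟩] ≥ ν·E[‖x_t − x*‖²] for some ν > 0, where x* minimizes F and also ⟨∇F(x), x − x*⟩ ≥ (1/β)‖∇F(x)‖² for all x. Then the noisy gradient descent iterates x_{t+1} = x_t − η(∇F(x_t) + z_t) with step size η ≤ 1/β and z_t ∼ N(0, σ_t²I_p) independent of x_t satisfy E[‖x_{t+1} − x*‖²] ≤ (1 − ην)·E[‖x_t − x*‖²] + p·η²·σ_t². -/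
open MeasureTheory ProbabilityTheory

section GaussHelpers
open Real Set
open scoped ENNReal NNReal

lemma gauss_weight_integral {v : NNReal} (hv : v ≠ 0) (g : ℝ → ℝ) :
    ∫ y, g y ∂(gaussianReal 0 v) = ∫ y, gaussianPDFReal 0 v y * g y := by
  rw [gaussianReal_of_var_ne_zero 0 hv,
    show gaussianPDF 0 v = fun y => ((gaussianPDFReal 0 v y).toNNReal : ℝ≥0∞) from rfl,
    integral_withDensity_eq_integral_smul (measurable_gaussianPDFReal 0 v).real_toNNReal g]
  congr 1
  ext y
  simp [NNReal.smul_def, Real.coe_toNNReal _ (gaussianPDFReal_nonneg 0 v y)]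

lemma gauss_weight_integrable {v : NNReal} (hv : v ≠ 0) (g : ℝ → ℝ) :
    Integrable g (gaussianReal 0 v) ↔
      Integrable (fun y => gaussianPDFReal 0 v y * g y) volume := by
  rw [gaussianReal_of_var_ne_zero 0 hv,
    show gaussianPDF 0 v = fun y => ((gaussianPDFReal 0 v y).toNNReal : ℝ≥0∞) from rfl,
    integrable_withDensity_iff_integrable_smul (measurable_gaussianPDFReal 0 v).real_toNNReal]
  constructor <;> intro h <;> refine h.congr (Filter.Eventually.of_forall fun y => ?_) <;>
    simp [NNReal.smul_def, Real.coe_toNNReal _ (gaussianPDFReal_nonneg 0 v y)]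

lemma gaussianPDFReal_zero_eq {v : NNReal} (y : ℝ) :
    gaussianPDFReal 0 v y = (Real.sqrt (2 * π * v))⁻¹ * Real.exp (-(2 * (v:ℝ))⁻¹ * y ^ 2) := by
  rw [gaussianPDFReal]
  ring_nf

lemma dirac_integrable {f : ℝ → ℝ} (a : ℝ) : Integrable f (Measure.dirac a) := by
  refine (integrable_const (f a)).congr ?_
  rw [Filter.EventuallyEq, ae_dirac_eq]
  exact Filter.eventually_pure.mpr rfl

lemma integrable_id_gauss (v : NNReal) : Integrable (fun y : ℝ => y) (gaussianReal 0 v) := by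
  by_cases hv : v = 0
  · simp only [hv, gaussianReal_zero_var]; exact dirac_integrable 0
  · have hvpos : (0:ℝ) < v := lt_of_le_of_ne v.2 (by exact_mod_cast (Ne.symm hv))
    have hbpos : (0:ℝ) < (2 * (v:ℝ))⁻¹ := by positivity
    rw [gauss_weight_integrable hv]
    refine ((integrable_mul_exp_neg_mul_sq hbpos).const_mul
      ((Real.sqrt (2 * π * v))⁻¹)).congr (Filter.Eventually.of_forall fun y => ?_)
    simp only [gaussianPDFReal_zero_eq]
    ring

lemma integral_id_gauss (v : NNReal) : ∫ y, y ∂(gaussianReal 0 v) = 0 := by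
  by_cases hv : v = 0
  · simp [hv, gaussianReal_zero_var]
  · rw [gauss_weight_integral hv]
    set f : ℝ → ℝ := fun y => gaussianPDFReal 0 v y * y with hf
    have hodd : ∀ y, f (-y) = - f y := by
      intro y
      simp only [hf, gaussianPDFReal_zero_eq, neg_sq]
      ring
    have h1 : ∫ y, f y = ∫ y, f (-y) := by
      conv_lhs => rw [← Measure.map_neg_eq_self (volume : Measure ℝ)]
      exact (Homeomorph.neg ℝ).measurableEmbedding.integral_map f
    have h2 : ∫ y, f (-y) = - ∫ y, f y := by
      simp only [hodd]; exact integral_neg f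
    linarith [h1, h2]

lemma rpow_two' (x : ℝ) : x ^ (2:ℝ) = x ^ 2 := by
  rw [show (2:ℝ) = ((2:ℕ):ℝ) by norm_num, Real.rpow_natCast]

lemma integrable_sq_gauss (v : NNReal) :
    Integrable (fun y : ℝ => y ^ 2) (gaussianReal 0 v) := by
  by_cases hv : v = 0
  · simp only [hv, gaussianReal_zero_var]; exact dirac_integrable 0
  · have hvpos : (0:ℝ) < v := lt_of_le_of_ne v.2 (by exact_mod_cast (Ne.symm hv))
    have hbpos : (0:ℝ) < (2 * (v:ℝ))⁻¹ := by positivity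
    rw [gauss_weight_integrable hv]
    refine ((integrable_rpow_mul_exp_neg_mul_sq hbpos
      (by norm_num : (-1:ℝ) < 2)).const_mul
      ((Real.sqrt (2 * π * v))⁻¹)).congr (Filter.Eventually.of_forall fun y => ?_)
    simp only [gaussianPDFReal_zero_eq, rpow_two']
    ring

lemma integral_sq_gauss (v : NNReal) : ∫ y, y ^ 2 ∂(gaussianReal 0 v) = v := by
  by_cases hv : v = 0
  · simp [hv, gaussianReal_zero_var]
  · have hvpos : (0:ℝ) < v := lt_of_le_of_ne v.2 (by exact_mod_cast (Ne.symm hv))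
    set b : ℝ := (2 * (v:ℝ))⁻¹ with hbdef
    have hbpos : (0:ℝ) < b := by positivity
    set c : ℝ := (Real.sqrt (2 * π * v))⁻¹ with hcdef
    rw [gauss_weight_integral hv]
    set fn : ℝ → ℝ := fun x => x ^ 2 * Real.exp (-b * x ^ 2) with hfn
    have step1 : ∫ y, gaussianPDFReal 0 v y * y ^ 2 = c * ∫ y, fn |y| := by
      rw [← integral_const_mul]
      congr 1; ext y
      simp only [hfn, gaussianPDFReal_zero_eq, sq_abs]
      ring
    have step2 : ∫ x in Ioi (0:ℝ), fn x
        = b ^ (-((2:ℝ)+1)/2) * (1/2) * Real.Gamma (((2:ℝ)+1)/2) := by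
      rw [← integral_rpow_mul_exp_neg_mul_rpow (by norm_num : (0:ℝ) < 2)
        (by norm_num : (-1:ℝ) < 2) hbpos]
      refine setIntegral_congr_fun measurableSet_Ioi fun x hx => ?_
      simp only [hfn, rpow_two']
    rw [step1, integral_comp_abs, step2]
    have hGamma : Real.Gamma (((2:ℝ)+1)/2) = Real.sqrt π / 2 := by
      rw [show ((2:ℝ)+1)/2 = 1/2 + 1 by norm_num, Real.Gamma_add_one (by norm_num),
        Real.Gamma_one_half_eq]
      ring
    have hbval : b ^ (-((2:ℝ)+1)/2) = (2 * (v:ℝ)) * Real.sqrt (2 * (v:ℝ)) := by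
      rw [hbdef, show (-((2:ℝ)+1)/2) = -(3/2) by norm_num,
        Real.rpow_neg (by positivity), Real.inv_rpow (by positivity), inv_inv,
        show (3:ℝ)/2 = 1 + 1/2 by norm_num,
        Real.rpow_add (by positivity), Real.rpow_one, ← Real.sqrt_eq_rpow]
    rw [hGamma, hbval, hcdef]
    have h1 : Real.sqrt (2 * π * v) = Real.sqrt π * Real.sqrt (2 * v) := by
      rw [← Real.sqrt_mul pi_pos.le]
      ring_nf
    have h2 : Real.sqrt (2 * (v:ℝ)) * Real.sqrt (2 * (v:ℝ)) = 2 * v :=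
      Real.mul_self_sqrt (by positivity)
    have h3 : Real.sqrt π ≠ 0 := by positivity
    have h4 : Real.sqrt (2 * (v:ℝ)) ≠ 0 := by positivity
    rw [h1]
    field_simp

end GaussHelpers

section EuclidHelpers
variable {p : ℕ}

lemma euclid_norm_sq_eq_sum (u : EuclideanSpace ℝ (Fin p)) : ‖u‖^2 = ∑ i, (u i)^2 := by
  rw [EuclideanSpace.norm_eq, Real.sq_sqrt (by positivity)]
  simp [sq_abs]

lemma euclid_abs_coord_le (u : EuclideanSpace ℝ (Fin p)) (i : Fin p) : |u i| ≤ ‖u‖ := by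
  rw [EuclideanSpace.norm_eq, ← Real.sqrt_sq_eq_abs]
  apply Real.sqrt_le_sqrt
  have := Finset.single_le_sum (f := fun j => ‖u j‖^2) (fun j _ => by positivity)
    (Finset.mem_univ i)
  simpa [sq_abs] using this

lemma euclid_inner_eq_sum (u w : EuclideanSpace ℝ (Fin p)) :
    (inner ℝ u w : ℝ) = ∑ i, u i * w i := by
  simp [PiLp.inner_apply, RCLike.inner_apply, conj_trivial, mul_comm]

lemma norm_sub_smul_sq (a b : EuclideanSpace ℝ (Fin p)) (η : ℝ) :
    ‖a - η • b‖^2 = ‖a‖^2 - 2*η*(inner ℝ a b : ℝ) + η^2*‖b‖^2 := by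
  rw [norm_sub_sq_real, real_inner_smul_right, norm_smul]
  simp [mul_pow, sq_abs]
  ring

end EuclidHelpers

/-- `z` is a centered Gaussian vector in `ℝ^p` with covariance `v • I_p`:
its coordinates are independent real Gaussians `N(0, v)`. -/
def IsGaussianVec {Ω : Type*} [MeasurableSpace Ω] (P : Measure Ω) {p : ℕ}
    (z : Ω → EuclideanSpace ℝ (Fin p)) (v : NNReal) : Prop :=
  (∀ i, Measure.map (fun ω => z ω i) P = gaussianReal 0 v) ∧
    iIndepFun (fun i ω => z ω i) P

/-- one-step contraction of noisy gradient descent under the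
expected-curvature condition:
`E‖x_{t+1} − x*‖² ≤ (1 − ην)·E‖x_t − x*‖² + pη²σ_t²`. -/
theorem noisy_gd_contraction
    {p : ℕ} (F : EuclideanSpace ℝ (Fin p) → ℝ)
    (F' : EuclideanSpace ℝ (Fin p) → EuclideanSpace ℝ (Fin p))
    (hdiff : ∀ x, HasGradientAt F (F' x) x)
    (β ν : ℝ) (hβ : 0 < β) (hν : 0 < ν) (hνβ : ν ≤ β)
    (xstar : EuclideanSpace ℝ (Fin p)) (hmin : ∀ y, F xstar ≤ F y)
    (hcoco : ∀ x : EuclideanSpace ℝ (Fin p),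
      (inner ℝ (F' x) (x - xstar) : ℝ) ≥ (1 / β) * ‖F' x‖ ^ 2)
    {Ω : Type*} [MeasurableSpace Ω] (P : Measure Ω) [IsProbabilityMeasure P]
    (x z : ℕ → Ω → EuclideanSpace ℝ (Fin p))
    (σ : ℕ → ℝ) (hσ : ∀ t, 0 ≤ σ t)
    (η : ℝ) (hη : 0 < η) (hηβ : η ≤ 1 / β)
    (hx : ∀ t, Measurable (x t)) (hzmeas : ∀ t, Measurable (z t))
    (hgauss : ∀ t, IsGaussianVec P (z t) ⟨σ t ^ 2, by positivity⟩)
    (hindep : ∀ t, IndepFun (x t) (z t) P)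
    (hupdate : ∀ t ω, x (t + 1) ω = x t ω - η • (F' (x t ω) + z t ω))
    (hcurv : ∀ t, (∫ ω, (inner ℝ (F' (x t ω)) (x t ω - xstar) : ℝ) ∂P) ≥
      ν * ∫ ω, ‖x t ω - xstar‖ ^ 2 ∂P)
    (hint1 : ∀ t, Integrable (fun ω => ‖x t ω - xstar‖ ^ 2) P)
    (hint2 : ∀ t, Integrable (fun ω => ‖F' (x t ω)‖ ^ 2) P)
    (hint3 : ∀ t, Integrable
      (fun ω => (inner ℝ (F' (x t ω)) (x t ω - xstar) : ℝ)) P)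
    (t : ℕ) :
    (∫ ω, ‖x (t + 1) ω - xstar‖ ^ 2 ∂P) ≤
      (1 - η * ν) * (∫ ω, ‖x t ω - xstar‖ ^ 2 ∂P) + p * η ^ 2 * σ t ^ 2 := by
  classical
  set v : NNReal := ⟨σ t ^ 2, by positivity⟩ with hvdef
  -- measurability of F'
  have hF' : Measurable F' := by
    have h1 : ∀ u, F' u
        = (InnerProductSpace.toDual ℝ (EuclideanSpace ℝ (Fin p))).symm (fderiv ℝ F u) := by
      intro u
      rw [(hdiff u).hasFDerivAt.fderiv]
      simp
    rw [funext h1]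
    exact (InnerProductSpace.toDual ℝ _).symm.continuous.measurable.comp (measurable_fderiv ℝ F)
  set hfun : EuclideanSpace ℝ (Fin p) → EuclideanSpace ℝ (Fin p) :=
    fun u => (u - xstar) - η • F' u with hhfun
  have hhm : Measurable hfun := (measurable_id.sub measurable_const).sub (hF'.const_smul η)
  -- coordinates of z t
  have hZm : ∀ i, Measurable (fun ω => z t ω i) :=
    fun i => (EuclideanSpace.proj i).continuous.measurable.comp (hzmeas t)
  have hlaw : ∀ i, Measure.map (fun ω => z t ω i) P = gaussianReal 0 v := (hgauss t).1
  have hZint : ∀ i, Integrable (fun ω => z t ω i) P := by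
    intro i
    have h := (integrable_map_measure (f := fun ω => z t ω i) (g := fun y : ℝ => y)
      (by rw [hlaw i]; exact aestronglyMeasurable_id) (hZm i).aemeasurable).mp
      (by rw [hlaw i]; exact integrable_id_gauss v)
    exact h
  have hZzero : ∀ i, ∫ ω, z t ω i ∂P = 0 := by
    intro i
    calc ∫ ω, z t ω i ∂P
        = ∫ y, y ∂(Measure.map (fun ω => z t ω i) P) :=
          (integral_map (hZm i).aemeasurable (by rw [hlaw i]; exact aestronglyMeasurable_id)).symm
      _ = 0 := by rw [hlaw i]; exact integral_id_gauss v
  have hZsqint : ∀ i, Integrable (fun ω => (z t ω i) ^ 2) P := by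
    intro i
    have h := (integrable_map_measure (f := fun ω => z t ω i) (g := fun y : ℝ => y ^ 2)
      (by rw [hlaw i]
          exact (measurable_id.pow_const 2).aestronglyMeasurable) (hZm i).aemeasurable).mp
      (by rw [hlaw i]; exact integrable_sq_gauss v)
    exact h
  have hZsq : ∀ i, ∫ ω, (z t ω i) ^ 2 ∂P = σ t ^ 2 := by
    intro i
    calc ∫ ω, (z t ω i) ^ 2 ∂P
        = ∫ y, y ^ 2 ∂(Measure.map (fun ω => z t ω i) P) :=
          (integral_map (hZm i).aemeasurable
            (by rw [hlaw i]; exact (measurable_id.pow_const 2).aestronglyMeasurable)).symm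
      _ = v := by rw [hlaw i]; exact integral_sq_gauss v
      _ = σ t ^ 2 := rfl
  -- norm squared of z t
  have hZnormsq_int : Integrable (fun ω => ‖z t ω‖ ^ 2) P := by
    have heq : (fun ω => ‖z t ω‖ ^ 2) = fun ω => ∑ i, (z t ω i) ^ 2 :=
      funext fun ω => euclid_norm_sq_eq_sum _
    rw [heq]
    exact integrable_finset_sum _ fun i _ => hZsqint i
  have hZnormsq : ∫ ω, ‖z t ω‖ ^ 2 ∂P = p * σ t ^ 2 := by
    have heq : (fun ω => ‖z t ω‖ ^ 2) = fun ω => ∑ i, (z t ω i) ^ 2 :=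
      funext fun ω => euclid_norm_sq_eq_sum _
    rw [heq, integral_finset_sum _ fun i _ => hZsqint i]
    simp [hZsq, Finset.sum_const, Finset.card_univ, mul_comm]
  -- integrability of norms
  have hwm : Measurable (fun ω => x t ω - xstar) := (hx t).sub measurable_const
  have hAnorm : Integrable (fun ω => ‖x t ω - xstar‖) P := by
    refine Integrable.mono' ((hint1 t).add (integrable_const 1))
      hwm.norm.aestronglyMeasurable (Filter.Eventually.of_forall fun ω => ?_)
    simp only [Pi.add_apply]
    rw [Real.norm_eq_abs, abs_of_nonneg (norm_nonneg _)]
    nlinarith [norm_nonneg (x t ω - xstar), sq_nonneg (‖x t ω - xstar‖ - 1)]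
  have hGnorm : Integrable (fun ω => ‖F' (x t ω)‖) P := by
    refine Integrable.mono' ((hint2 t).add (integrable_const 1))
      ((hF'.comp (hx t)).norm).aestronglyMeasurable (Filter.Eventually.of_forall fun ω => ?_)
    simp only [Pi.add_apply]
    rw [Real.norm_eq_abs, abs_of_nonneg (norm_nonneg _)]
    nlinarith [norm_nonneg (F' (x t ω)), sq_nonneg (‖F' (x t ω)‖ - 1)]
  -- cross term coordinates
  have hXi_int : ∀ i, Integrable (fun ω => hfun (x t ω) i) P := by
    intro i
    refine Integrable.mono' (hAnorm.add (hGnorm.const_mul η))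
      (((EuclideanSpace.proj i).continuous.measurable.comp (hhm.comp (hx t))).aestronglyMeasurable)
      (Filter.Eventually.of_forall fun ω => ?_)
    rw [Real.norm_eq_abs]
    calc |hfun (x t ω) i| ≤ ‖hfun (x t ω)‖ := euclid_abs_coord_le _ i
      _ ≤ ‖x t ω - xstar‖ + ‖η • F' (x t ω)‖ := norm_sub_le _ _
      _ ≤ ‖x t ω - xstar‖ + η * ‖F' (x t ω)‖ := by
          rw [norm_smul, Real.norm_eq_abs, abs_of_pos hη]
  have hindep_i : ∀ i, IndepFun (fun ω => hfun (x t ω) i) (fun ω => z t ω i) P := by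
    intro i
    exact (hindep t).comp ((EuclideanSpace.proj i).continuous.measurable.comp hhm)
      (EuclideanSpace.proj i).continuous.measurable
  have hprod_int : ∀ i, Integrable (fun ω => hfun (x t ω) i * z t ω i) P := by
    intro i
    exact (hindep_i i).integrable_mul (hXi_int i) (hZint i)
  have hprod_zero : ∀ i, ∫ ω, hfun (x t ω) i * z t ω i ∂P = 0 := by
    intro i
    have h := (hindep_i i).integral_mul_eq_mul_integral (hXi_int i).aestronglyMeasurable
      (hZint i).aestronglyMeasurable
    calc ∫ ω, hfun (x t ω) i * z t ω i ∂P
        = (∫ ω, hfun (x t ω) i ∂P) * ∫ ω, z t ω i ∂P := h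
      _ = 0 := by rw [hZzero i, mul_zero]
  have hcross_eq : (fun ω => (inner ℝ (hfun (x t ω)) (z t ω) : ℝ))
      = fun ω => ∑ i, hfun (x t ω) i * z t ω i :=
    funext fun ω => euclid_inner_eq_sum _ _
  have hcross_int : Integrable (fun ω => (inner ℝ (hfun (x t ω)) (z t ω) : ℝ)) P := by
    rw [hcross_eq]
    exact integrable_finset_sum _ fun i _ => hprod_int i
  have hcross_zero : ∫ ω, (inner ℝ (hfun (x t ω)) (z t ω) : ℝ) ∂P = 0 := by
    rw [hcross_eq, integral_finset_sum _ fun i _ => hprod_int i]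
    simp [hprod_zero]
  -- pointwise expansion
  have hpoint : ∀ ω, ‖x (t + 1) ω - xstar‖ ^ 2
      = (‖x t ω - xstar‖ ^ 2 - (2 * η) * (inner ℝ (F' (x t ω)) (x t ω - xstar) : ℝ)
          + η ^ 2 * ‖F' (x t ω)‖ ^ 2)
        + ((-(2 * η)) * (inner ℝ (hfun (x t ω)) (z t ω) : ℝ) + η ^ 2 * ‖z t ω‖ ^ 2) := by
    intro ω
    have hstep : x (t + 1) ω - xstar = hfun (x t ω) - η • z t ω := by
      rw [hupdate t ω, hhfun]
      simp only [smul_add]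
      abel
    rw [hstep, norm_sub_smul_sq, hhfun]
    simp only []
    rw [norm_sub_smul_sq (x t ω - xstar) (F' (x t ω)) η]
    rw [real_inner_comm (x t ω - xstar) (F' (x t ω))]
    ring
  -- integrate
  have hIb : Integrable (fun ω => (2 * η) * (inner ℝ (F' (x t ω)) (x t ω - xstar) : ℝ)) P :=
    (hint3 t).const_mul (2 * η)
  have hIc : Integrable (fun ω => η ^ 2 * ‖F' (x t ω)‖ ^ 2) P :=
    (hint2 t).const_mul (η ^ 2)
  have hIa : Integrable (fun ω => ‖x t ω - xstar‖ ^ 2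
      - (2 * η) * (inner ℝ (F' (x t ω)) (x t ω - xstar) : ℝ)) P := (hint1 t).sub hIb
  have hI1 : Integrable (fun ω => ‖x t ω - xstar‖ ^ 2
      - (2 * η) * (inner ℝ (F' (x t ω)) (x t ω - xstar) : ℝ)
      + η ^ 2 * ‖F' (x t ω)‖ ^ 2) P := hIa.add hIc
  have hId : Integrable (fun ω => (-(2 * η)) * (inner ℝ (hfun (x t ω)) (z t ω) : ℝ)) P :=
    hcross_int.const_mul _
  have hIe : Integrable (fun ω => η ^ 2 * ‖z t ω‖ ^ 2) P :=
    hZnormsq_int.const_mul _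
  have hI2 : Integrable (fun ω => (-(2 * η)) * (inner ℝ (hfun (x t ω)) (z t ω) : ℝ)
      + η ^ 2 * ‖z t ω‖ ^ 2) P := hId.add hIe
  have hsplit : ∫ ω, ‖x (t + 1) ω - xstar‖ ^ 2 ∂P
      = ((∫ ω, ‖x t ω - xstar‖ ^ 2 ∂P)
          - (2 * η) * ∫ ω, (inner ℝ (F' (x t ω)) (x t ω - xstar) : ℝ) ∂P
          + η ^ 2 * ∫ ω, ‖F' (x t ω)‖ ^ 2 ∂P)
        + ((-(2 * η)) * ∫ ω, (inner ℝ (hfun (x t ω)) (z t ω) : ℝ) ∂P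
          + η ^ 2 * ∫ ω, ‖z t ω‖ ^ 2 ∂P) := by
    rw [show (fun ω => ‖x (t + 1) ω - xstar‖ ^ 2) = _ from funext hpoint]
    rw [integral_add hI1 hI2, integral_add hIa hIc, integral_sub (hint1 t) hIb,
      integral_add hId hIe,
      integral_const_mul, integral_const_mul, integral_const_mul, integral_const_mul]
  rw [hsplit, hcross_zero, hZnormsq]
  set A := ∫ ω, ‖x t ω - xstar‖ ^ 2 ∂P with hA
  set C := ∫ ω, (inner ℝ (F' (x t ω)) (x t ω - xstar) : ℝ) ∂P with hC
  set G := ∫ ω, ‖F' (x t ω)‖ ^ 2 ∂P with hG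
  have hCA : ν * A ≤ C := hcurv t
  have hGnn : 0 ≤ G := integral_nonneg fun ω => by positivity
  have hCG : (1 / β) * G ≤ C := by
    rw [hG, ← integral_const_mul]
    exact integral_mono ((hint2 t).const_mul (1 / β)) (hint3 t) fun ω => hcoco (x t ω)
  have e1 : η * (ν * A) ≤ η * C := mul_le_mul_of_nonneg_left hCA hη.le
  have e2 : η * ((1 / β) * G) ≤ η * C := mul_le_mul_of_nonneg_left hCG hη.le
  have e3 : η ^ 2 * G ≤ η * ((1 / β) * G) := by
    have h5 : η * G ≤ (1 / β) * G := mul_le_mul_of_nonneg_right hηβ hGnn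
    calc η ^ 2 * G = η * (η * G) := by ring
      _ ≤ η * ((1 / β) * G) := mul_le_mul_of_nonneg_left h5 hη.le
  nlinarith [e1, e2, e3]
end

section
/- Consider noisy gradient descent x_{t+1} = x_t − (1/β)(∇F(x_t) + z_t) on a convex β-smooth differentiable F: ℝ^p → ℝ, where z_t ∼ N(0, σ²I_p) is independent of x_t. Then for any minimizer x* of F and each step t, E[F(x_{t+1}) − F(x*)] ≤ (β/2)·(E[‖x_t − x*‖²] − E[‖x_{t+1} − x*‖²]) + (1/β)·p·σ². -/
open MeasureTheory ProbabilityTheory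
open Real Filter
open scoped NNReal ENNReal

lemma tendsto_exp_neg_sq_top {b : ℝ} (hb : 0 < b) :
    Tendsto (fun x : ℝ => Real.exp (-b * x ^ 2)) atTop (nhds 0) := by
  apply Real.tendsto_exp_atBot.comp
  have h : Tendsto (fun x : ℝ => x ^ 2) atTop atTop := tendsto_pow_atTop two_ne_zero
  rw [show (fun x : ℝ => -b * x ^ 2) = (fun x : ℝ => -(b * x ^ 2)) by funext x; ring]
  exact tendsto_neg_atBot_iff.mpr (h.const_mul_atTop hb)

lemma tendsto_exp_neg_sq_bot {b : ℝ} (hb : 0 < b) :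
    Tendsto (fun x : ℝ => Real.exp (-b * x ^ 2)) atBot (nhds 0) := by
  have h := (tendsto_exp_neg_sq_top hb).comp (tendsto_neg_atBot_atTop (G := ℝ))
  convert h using 2 with x
  simp only [Function.comp_apply]
  ring_nf

lemma hasDerivAt_aux {b : ℝ} (hb : 0 < b) (x : ℝ) :
    HasDerivAt (fun y : ℝ => -(2 * b)⁻¹ * Real.exp (-b * y ^ 2))
      (x * Real.exp (-b * x ^ 2)) x := by
  have h1 : HasDerivAt (fun y : ℝ => -b * y ^ 2) (-b * (2 * x)) x := by
    simpa using ((hasDerivAt_pow 2 x).const_mul (-b))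
  have h2 := (h1.exp).const_mul (-(2 * b)⁻¹)
  refine h2.congr_deriv ?_
  have hk : (2 * b)⁻¹ * (2 * b) = 1 := inv_mul_cancel₀ (by positivity)
  linear_combination (x * Real.exp (-b * x ^ 2)) * hk

lemma integrable_sq_exp {b : ℝ} (hb : 0 < b) :
    Integrable (fun x : ℝ => x ^ 2 * Real.exp (-b * x ^ 2)) := by
  have := integrable_rpow_mul_exp_neg_mul_sq hb (s := 2) (by norm_num)
  simpa [Real.rpow_natCast] using this

lemma integral_id_mul_exp {b : ℝ} (hb : 0 < b) :
    ∫ x : ℝ, x * Real.exp (-b * x ^ 2) = 0 := by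
  have h := integral_of_hasDerivAt_of_tendsto (E := ℝ)
    (f := fun y : ℝ => -(2 * b)⁻¹ * Real.exp (-b * y ^ 2))
    (f' := fun x : ℝ => x * Real.exp (-b * x ^ 2))
    (fun x => hasDerivAt_aux hb x)
    (integrable_mul_exp_neg_mul_sq hb)
    (by simpa using ((tendsto_exp_neg_sq_bot hb).const_mul (-(2 * b)⁻¹)))
    (by simpa using ((tendsto_exp_neg_sq_top hb).const_mul (-(2 * b)⁻¹)))
  simpa using h

lemma integral_sq_mul_exp {b : ℝ} (hb : 0 < b) :
    ∫ x : ℝ, x ^ 2 * Real.exp (-b * x ^ 2) = (2 * b)⁻¹ * Real.sqrt (π / b) := by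
  have h := integral_mul_deriv_eq_deriv_mul_of_integrable
    (u := fun y : ℝ => y) (u' := fun _ => (1 : ℝ))
    (v := fun y : ℝ => -(2 * b)⁻¹ * Real.exp (-b * y ^ 2))
    (v' := fun y : ℝ => y * Real.exp (-b * y ^ 2))
    (fun y _ => hasDerivAt_id y) (fun y _ => hasDerivAt_aux hb y)
    (by simpa [Pi.mul_def, mul_comm, mul_assoc, mul_left_comm, sq] using integrable_sq_exp hb)
    (by
      have h1 := (integrable_exp_neg_mul_sq hb).const_mul (-(2 * b)⁻¹)
      apply h1.congr
      filter_upwards with y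
      simp [Pi.mul_apply])
    (by
      have h2 := (integrable_mul_exp_neg_mul_sq hb).const_mul (-(2 * b)⁻¹)
      apply h2.congr
      filter_upwards with y
      simp [Pi.mul_apply]
      ring)
  have hint : ∫ x : ℝ, (1 : ℝ) * (-(2 * b)⁻¹ * Real.exp (-b * x ^ 2))
      = -(2 * b)⁻¹ * Real.sqrt (π / b) := by
    simp only [one_mul]
    rw [integral_const_mul, integral_gaussian]
  have hL : (fun x : ℝ => x * (x * Real.exp (-b * x ^ 2)))
      = fun x : ℝ => x ^ 2 * Real.exp (-b * x ^ 2) := by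
    funext y; ring
  rw [show (∫ x : ℝ, x ^ 2 * Real.exp (-b * x ^ 2))
      = ∫ x : ℝ, x * (x * Real.exp (-b * x ^ 2)) by rw [hL]]
  rw [h, hint]
  ring

lemma gaussianPDFReal_eq (v : ℝ≥0) (x : ℝ) :
    gaussianPDFReal 0 v x
      = (Real.sqrt (2 * π * v))⁻¹ * Real.exp (-(2 * (v : ℝ))⁻¹ * x ^ 2) := by
  rw [gaussianPDFReal, sub_zero, neg_div, div_eq_inv_mul, neg_mul]

lemma integral_fun_gaussianReal {v : ℝ≥0} (hv : v ≠ 0) (g : ℝ → ℝ) :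
    (∫ x, g x ∂(gaussianReal 0 v)) = ∫ x, gaussianPDFReal 0 v x * g x := by
  rw [gaussianReal_of_var_ne_zero 0 hv]
  rw [show gaussianPDF 0 v = fun x => (((gaussianPDFReal 0 v x).toNNReal : ℝ≥0) : ℝ≥0∞)
    from rfl]
  rw [integral_withDensity_eq_integral_smul (measurable_gaussianPDFReal 0 v).real_toNNReal g]
  congr 1
  funext x
  simp [NNReal.smul_def, Real.coe_toNNReal _ (gaussianPDFReal_nonneg 0 v x)]

lemma integrable_fun_gaussianReal {v : ℝ≥0} (hv : v ≠ 0) (g : ℝ → ℝ)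
    (h : Integrable (fun x => gaussianPDFReal 0 v x * g x)) :
    Integrable g (gaussianReal 0 v) := by
  rw [gaussianReal_of_var_ne_zero 0 hv]
  rw [show gaussianPDF 0 v = fun x => (((gaussianPDFReal 0 v x).toNNReal : ℝ≥0) : ℝ≥0∞)
    from rfl]
  rw [integrable_withDensity_iff_integrable_smul (measurable_gaussianPDFReal 0 v).real_toNNReal]
  apply h.congr
  filter_upwards with x
  simp [NNReal.smul_def, Real.coe_toNNReal _ (gaussianPDFReal_nonneg 0 v x)]

lemma integral_id_gaussianReal0 (v : ℝ≥0) : ∫ x, x ∂(gaussianReal 0 v) = 0 := by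
  rcases eq_or_ne v 0 with hv | hv
  · simp [hv, gaussianReal_zero_var]
  · have hv' : (0:ℝ) < v := by exact_mod_cast pos_iff_ne_zero.mpr hv
    have hb : (0:ℝ) < (2 * (v : ℝ))⁻¹ := by positivity
    rw [integral_fun_gaussianReal hv]
    have hfun : (fun x : ℝ => gaussianPDFReal 0 v x * x)
        = fun x => (Real.sqrt (2*π*v))⁻¹ * (x * Real.exp (-(2*(v:ℝ))⁻¹ * x^2)) := by
      funext x; rw [gaussianPDFReal_eq]; ring
    rw [hfun, integral_const_mul, integral_id_mul_exp hb, mul_zero]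

lemma integral_sq_gaussianReal0 (v : ℝ≥0) : ∫ x, x^2 ∂(gaussianReal 0 v) = v := by
  rcases eq_or_ne v 0 with hv | hv
  · simp [hv, gaussianReal_zero_var]
  · have hv' : (0:ℝ) < v := by exact_mod_cast pos_iff_ne_zero.mpr hv
    have hb : (0:ℝ) < (2 * (v : ℝ))⁻¹ := by positivity
    rw [integral_fun_gaussianReal hv]
    have hfun : (fun x : ℝ => gaussianPDFReal 0 v x * x^2)
        = fun x => (Real.sqrt (2*π*v))⁻¹ * (x^2 * Real.exp (-(2*(v:ℝ))⁻¹ * x^2)) := by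
      funext x; rw [gaussianPDFReal_eq]; ring
    rw [hfun, integral_const_mul, integral_sq_mul_exp hb]
    have h2b : (2 * (2*(v:ℝ))⁻¹)⁻¹ = (v:ℝ) := by
      rw [mul_inv, inv_inv]; field_simp
    have hπ : π / (2*(v:ℝ))⁻¹ = 2*π*(v:ℝ) := by field_simp
    rw [hπ, h2b]
    have hs : Real.sqrt (2*π*(v:ℝ)) ≠ 0 := by
      refine ne_of_gt (Real.sqrt_pos.mpr (by positivity))
    field_simp

lemma integrable_id_gaussianReal0 (v : ℝ≥0) :
    Integrable (fun x : ℝ => x) (gaussianReal 0 v) := by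
  rcases eq_or_ne v 0 with hv | hv
  · subst hv
    rw [gaussianReal_zero_var]
    refine ⟨measurable_id.aestronglyMeasurable, ?_⟩
    rw [HasFiniteIntegral, lintegral_dirac' _ measurable_enorm]
    exact enorm_lt_top
  · have hv' : (0:ℝ) < v := by exact_mod_cast pos_iff_ne_zero.mpr hv
    have hb : (0:ℝ) < (2 * (v : ℝ))⁻¹ := by positivity
    apply integrable_fun_gaussianReal hv
    have := (integrable_mul_exp_neg_mul_sq hb).const_mul (Real.sqrt (2*π*v))⁻¹
    apply this.congr
    filter_upwards with y
    rw [gaussianPDFReal_eq]; ring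

lemma integrable_sq_gaussianReal0 (v : ℝ≥0) :
    Integrable (fun x : ℝ => x^2) (gaussianReal 0 v) := by
  rcases eq_or_ne v 0 with hv | hv
  · subst hv
    rw [gaussianReal_zero_var]
    refine ⟨(measurable_id.pow_const 2).aestronglyMeasurable, ?_⟩
    rw [HasFiniteIntegral,
      lintegral_dirac' _ (by fun_prop : Measurable fun a : ℝ => ‖a ^ 2‖ₑ)]
    exact enorm_lt_top
  · have hv' : (0:ℝ) < v := by exact_mod_cast pos_iff_ne_zero.mpr hv
    have hb : (0:ℝ) < (2 * (v : ℝ))⁻¹ := by positivity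
    apply integrable_fun_gaussianReal hv
    have := (integrable_sq_exp hb).const_mul (Real.sqrt (2*π*v))⁻¹
    apply this.congr
    filter_upwards with y
    rw [gaussianPDFReal_eq]; ring

section Det

variable {H : Type*} [NormedAddCommGroup H] [InnerProductSpace ℝ H] [CompleteSpace H]

lemma grad_convex_ineq {F : H → ℝ} {F' : H → H}
    (hdiff : ∀ x, HasGradientAt F (F' x) x) (hconv : ConvexOn ℝ Set.univ F)
    (x y : H) : (inner ℝ (F' x) (y - x) : ℝ) ≤ F y - F x := by
  have hφconv : ConvexOn ℝ Set.univ (F ∘ (AffineMap.lineMap x y : ℝ →ᵃ[ℝ] H)) := by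
    have h := hconv.comp_affineMap (AffineMap.lineMap x y : ℝ →ᵃ[ℝ] H)
    simpa using h
  have hc : HasDerivAt (fun s : ℝ => (AffineMap.lineMap x y : ℝ →ᵃ[ℝ] H) s) (y - x) 0 := by
    simp only [AffineMap.lineMap_apply_module]
    have h2 : HasDerivAt (fun s : ℝ => s • (y - x) + x) (y - x) 0 := by
      simpa using (((hasDerivAt_id (0:ℝ)).smul_const (y - x)).add_const x)
    have he : (fun s : ℝ => s • (y - x) + x) = fun s : ℝ => (1 - s) • x + s • y := by
      funext s
      module
    rwa [he] at h2
  have hF : HasFDerivAt F (InnerProductSpace.toDual ℝ H (F' x))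
      ((AffineMap.lineMap x y : ℝ →ᵃ[ℝ] H) 0) := by
    rw [AffineMap.lineMap_apply_zero]
    exact hasGradientAt_iff_hasFDerivAt.mp (hdiff x)
  have hφ : HasDerivAt (F ∘ (AffineMap.lineMap x y : ℝ →ᵃ[ℝ] H))
      (inner ℝ (F' x) (y - x) : ℝ) 0 := by
    have h := hF.comp_hasDerivAt 0 hc
    simpa [InnerProductSpace.toDual_apply_apply] using h
  have hslope := hφconv.le_slope_of_hasDerivAt (Set.mem_univ 0) (Set.mem_univ 1)
    one_pos hφ
  rw [slope_def_field] at hslope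
  simpa [AffineMap.lineMap_apply_zero, AffineMap.lineMap_apply_one] using hslope

lemma grad_sq_le {F : H → ℝ} {F' : H → H} {β : ℝ} (hβ : 0 < β)
    (hsmooth : ∀ x y : H, F y ≤ F x + (inner ℝ (F' x) (y - x) : ℝ) + β / 2 * ‖y - x‖ ^ 2)
    {xstar : H} (hmin : ∀ y, F xstar ≤ F y) (y : H) :
    ‖F' y‖ ^ 2 ≤ 2 * β * (F y - F xstar) := by
  have hβ0 : β ≠ 0 := ne_of_gt hβ
  have h := hsmooth y (y - (1 / β) • F' y)
  have e0 : (y - (1 / β) • F' y) - y = -((1 / β) • F' y) := by abel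
  rw [e0] at h
  have e1 : (inner ℝ (F' y) (-((1 / β) • F' y)) : ℝ) = -((1/β) * ‖F' y‖ ^ 2) := by
    rw [inner_neg_right, real_inner_smul_right, real_inner_self_eq_norm_sq]
  have e2 : ‖-((1 / β) • F' y)‖ ^ 2 = (1/β)^2 * ‖F' y‖ ^ 2 := by
    rw [norm_neg, norm_smul]
    rw [Real.norm_eq_abs, mul_pow, sq_abs]
  rw [e1, e2] at h
  have h2 := hmin (y - (1 / β) • F' y)
  have key : F y + -((1/β) * ‖F' y‖ ^ 2) + β / 2 * ((1/β)^2 * ‖F' y‖ ^ 2)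
      = F y - (1/(2*β)) * ‖F' y‖ ^ 2 := by
    field_simp
    ring
  rw [key] at h
  have h3 : F xstar ≤ F y - (1/(2*β)) * ‖F' y‖ ^ 2 := le_trans h2 h
  have h4 : (1/(2*β)) * ‖F' y‖ ^ 2 ≤ F y - F xstar := by linarith
  calc ‖F' y‖ ^ 2 = (2*β) * ((1/(2*β)) * ‖F' y‖ ^ 2) := by field_simp
    _ ≤ (2*β) * (F y - F xstar) := by
        apply mul_le_mul_of_nonneg_left h4 (by positivity)
    _ = 2 * β * (F y - F xstar) := by ring

lemma pointwise_ineq {F : H → ℝ} {F' : H → H} {β : ℝ} (hβ : 0 < β)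
    (hsmooth : ∀ x y : H, F y ≤ F x + (inner ℝ (F' x) (y - x) : ℝ) + β / 2 * ‖y - x‖ ^ 2)
    (hgrad : ∀ x y : H, (inner ℝ (F' x) (y - x) : ℝ) ≤ F y - F x)
    (xstar X w : H) :
    F (X - (1 / β) • (F' X + w)) - F xstar ≤
      β / 2 * (‖X - xstar‖ ^ 2 - ‖X - (1 / β) • (F' X + w) - xstar‖ ^ 2)
        + (inner ℝ w ((1 / β) • F' X - (X - xstar)) : ℝ) + (1 / β) * ‖w‖ ^ 2 := by
  have hβ0 : β ≠ 0 := ne_of_gt hβ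
  set g := F' X with hg
  set a := X - xstar with ha
  set u := g + w with hu
  set Xp := X - (1 / β) • u with hXp
  have eA : Xp - X = -((1 / β) • u) := by rw [hXp]; abel
  have eB : Xp - xstar = a - (1 / β) • u := by rw [hXp, ha]; abel
  have h1 := hsmooth X Xp
  have e1 : (inner ℝ g (Xp - X) : ℝ) = -((1/β) * (‖g‖^2 + inner ℝ g w)) := by
    rw [eA, inner_neg_right, real_inner_smul_right, hu, inner_add_right,
      real_inner_self_eq_norm_sq]
  have enu : ‖u‖ ^ 2 = ‖g‖^2 + 2 * (inner ℝ g w : ℝ) + ‖w‖^2 := by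
    rw [hu, norm_add_sq_real]
  have e2 : ‖Xp - X‖ ^ 2 = (1/β)^2 * (‖g‖^2 + 2 * (inner ℝ g w : ℝ) + ‖w‖^2) := by
    rw [eA, norm_neg, norm_smul, Real.norm_eq_abs, mul_pow, sq_abs, enu]
  have e3 : ‖Xp - xstar‖ ^ 2
      = ‖a‖^2 - 2 * ((1/β) * ((inner ℝ a g : ℝ) + (inner ℝ a w : ℝ)))
        + (1/β)^2 * (‖g‖^2 + 2 * (inner ℝ g w : ℝ) + ‖w‖^2) := by
    rw [eB, norm_sub_sq_real, real_inner_smul_right, hu, inner_add_right, norm_smul,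
      Real.norm_eq_abs, mul_pow, sq_abs, enu]
  have e4 : (inner ℝ w ((1 / β) • g - a) : ℝ)
      = (1/β) * (inner ℝ g w : ℝ) - (inner ℝ a w : ℝ) := by
    rw [inner_sub_right, real_inner_smul_right, real_inner_comm w g, real_inner_comm w a]
  have e5 : F X - F xstar ≤ (inner ℝ a g : ℝ) := by
    have h := hgrad X xstar
    have e : (inner ℝ g (xstar - X) : ℝ) = -(inner ℝ a g : ℝ) := by
      rw [ha, real_inner_comm, inner_sub_left, inner_sub_left]
      ring
    rw [e] at h
    linarith
  have key : β / 2 * (‖a‖^2 - (‖a‖^2 - 2 * ((1/β) * ((inner ℝ a g : ℝ) + (inner ℝ a w : ℝ)))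
        + (1/β)^2 * (‖g‖^2 + 2 * (inner ℝ g w : ℝ) + ‖w‖^2)))
        + ((1/β) * (inner ℝ g w : ℝ) - (inner ℝ a w : ℝ)) + (1/β) * ‖w‖^2
      = (-((1/β) * (‖g‖^2 + (inner ℝ g w : ℝ)))
          + β / 2 * ((1/β)^2 * (‖g‖^2 + 2 * (inner ℝ g w : ℝ) + ‖w‖^2)))
        + (inner ℝ a g : ℝ) := by
    field_simp
    ring
  have hgoal : F Xp - F xstar ≤
      β / 2 * (‖a‖ ^ 2 - ‖Xp - xstar‖ ^ 2)
        + (inner ℝ w ((1 / β) • g - a) : ℝ) + (1 / β) * ‖w‖ ^ 2 := by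
    rw [e3, e4]
    rw [e1, e2] at h1
    linarith [h1, e5, key]
  exact hgoal

end Det

lemma abs_coord_le_norm {p : ℕ} (y : EuclideanSpace ℝ (Fin p)) (i : Fin p) : |y i| ≤ ‖y‖ := by
  rw [EuclideanSpace.norm_eq, ← Real.sqrt_sq_eq_abs]
  apply Real.sqrt_le_sqrt
  have h := Finset.single_le_sum (f := fun j => ‖y j‖ ^ 2)
    (fun j _ => sq_nonneg _) (Finset.mem_univ i)
  simpa [Real.norm_eq_abs, sq_abs] using h


/-- per-step descent inequality for noisy gradient descent with
step size `1/β` on a convex β-smooth function: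
`E[F(x_{t+1}) − F(x*)] ≤ (β/2)(E‖x_t−x*‖² − E‖x_{t+1}−x*‖²) + pσ²/β`. -/
theorem noisy_gd_per_step_descent
    {p : ℕ} (F : EuclideanSpace ℝ (Fin p) → ℝ)
    (F' : EuclideanSpace ℝ (Fin p) → EuclideanSpace ℝ (Fin p))
    (hdiff : ∀ x, HasGradientAt F (F' x) x)
    (hconv : ConvexOn ℝ Set.univ F)
    (β : ℝ) (hβ : 0 < β)
    (hsmooth : ∀ x y : EuclideanSpace ℝ (Fin p),
      F y ≤ F x + (inner ℝ (F' x) (y - x) : ℝ) + β / 2 * ‖y - x‖ ^ 2)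
    (xstar : EuclideanSpace ℝ (Fin p)) (hmin : ∀ y, F xstar ≤ F y)
    {Ω : Type*} [MeasurableSpace Ω] (P : Measure Ω) [IsProbabilityMeasure P]
    (x z : ℕ → Ω → EuclideanSpace ℝ (Fin p))
    (σ : ℝ) (hσ : 0 ≤ σ)
    (hx : ∀ t, Measurable (x t)) (hzmeas : ∀ t, Measurable (z t))
    (hgauss : ∀ t, IsGaussianVec P (z t) ⟨σ ^ 2, by positivity⟩)
    (hindep : ∀ t, IndepFun (x t) (z t) P)
    (hupdate : ∀ t ω, x (t + 1) ω = x t ω - (1 / β) • (F' (x t ω) + z t ω))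
    (hint1 : ∀ t, Integrable (fun ω => ‖x t ω - xstar‖ ^ 2) P)
    (hint2 : ∀ t, Integrable (fun ω => F (x t ω)) P)
    (t : ℕ) :
    (∫ ω, (F (x (t + 1) ω) - F xstar) ∂P) ≤
      β / 2 * ((∫ ω, ‖x t ω - xstar‖ ^ 2 ∂P) - ∫ ω, ‖x (t + 1) ω - xstar‖ ^ 2 ∂P)
        + (1 / β) * p * σ ^ 2 := by
  classical
  have hβ0 : β ≠ 0 := ne_of_gt hβ
  obtain ⟨hmap, -⟩ := hgauss t
  have hvr : ((⟨σ ^ 2, by positivity⟩ : ℝ≥0) : ℝ) = σ ^ 2 := rfl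
  -- measurability basics
  have hproj : ∀ i : Fin p, Measurable fun y : EuclideanSpace ℝ (Fin p) => y i :=
    fun i => (EuclideanSpace.proj (𝕜 := ℝ) i).continuous.measurable
  have hFc : Continuous F :=
    continuous_iff_continuousAt.mpr fun y => ((hdiff y).differentiableAt).continuousAt
  have hF'm : Measurable F' := by
    have he : F' = fun y => (InnerProductSpace.toDual ℝ (EuclideanSpace ℝ (Fin p))).symm
        (fderiv ℝ F y) := by
      funext y
      have h := (hasGradientAt_iff_hasFDerivAt.mp (hdiff y)).fderiv
      rw [h]
      simp
    rw [he]
    exact (LinearIsometryEquiv.continuous _).measurable.comp (measurable_fderiv ℝ F)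
  -- coordinate random variables
  set Z : Fin p → Ω → ℝ := fun i ω => z t ω i with hZdef
  set Y : Fin p → Ω → ℝ :=
    fun i ω => (1 / β) * F' (x t ω) i - (x t ω i - xstar i) with hYdef
  have mZ : ∀ i, Measurable (Z i) := fun i => (hproj i).comp (hzmeas t)
  have mY : ∀ i, Measurable (Y i) := fun i => by
    apply Measurable.sub
    · exact (((hproj i).comp (hF'm.comp (hx t)))).const_mul (1 / β)
    · exact ((hproj i).comp (hx t)).sub_const _
  -- gaussian coordinate facts
  have intZ : ∀ i, Integrable (Z i) P := by
    intro i
    have h1 : Integrable (fun y : ℝ => y) (Measure.map (Z i) P) := by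
      rw [hmap i]; exact integrable_id_gaussianReal0 _
    exact (integrable_map_measure aestronglyMeasurable_id (mZ i).aemeasurable).mp h1
  have intZ2 : ∀ i, Integrable (fun ω => Z i ω ^ 2) P := by
    intro i
    have h1 : Integrable (fun y : ℝ => y ^ 2) (Measure.map (Z i) P) := by
      rw [hmap i]; exact integrable_sq_gaussianReal0 _
    exact (integrable_map_measure ((measurable_id.pow_const 2).aestronglyMeasurable)
      (mZ i).aemeasurable).mp h1
  have hEZ : ∀ i, ∫ ω, Z i ω ∂P = 0 := by
    intro i
    calc ∫ ω, Z i ω ∂P = ∫ y, y ∂(Measure.map (Z i) P) :=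
          (integral_map (mZ i).aemeasurable aestronglyMeasurable_id).symm
      _ = 0 := by rw [hmap i]; exact integral_id_gaussianReal0 _
  have hEZ2 : ∀ i, ∫ ω, Z i ω ^ 2 ∂P = σ ^ 2 := by
    intro i
    calc ∫ ω, Z i ω ^ 2 ∂P = ∫ y, y ^ 2 ∂(Measure.map (Z i) P) :=
          (integral_map (mZ i).aemeasurable
            ((measurable_id.pow_const 2).aestronglyMeasurable)).symm
      _ = σ ^ 2 := by rw [hmap i]; exact integral_sq_gaussianReal0 _
  -- integrability of Y
  have hgradsq := grad_sq_le hβ hsmooth hmin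
  have intnormx : Integrable (fun ω => ‖x t ω - xstar‖) P := by
    apply Integrable.mono' ((integrable_const (1:ℝ)).add (hint1 t))
    · exact (((hx t).sub_const xstar).norm).aestronglyMeasurable
    · filter_upwards with ω
      simp only [Pi.add_apply]
      rw [Real.norm_eq_abs, abs_of_nonneg (norm_nonneg _)]
      nlinarith [sq_nonneg (‖x t ω - xstar‖ - 1), norm_nonneg (x t ω - xstar)]
  have intnormF' : Integrable (fun ω => ‖F' (x t ω)‖) P := by
    apply Integrable.mono' ((integrable_const (1:ℝ)).add
      (((hint2 t).sub (integrable_const (F xstar))).const_mul (2 * β)))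
    · exact ((hF'm.comp (hx t)).norm).aestronglyMeasurable
    · filter_upwards with ω
      simp only [Pi.add_apply, Pi.sub_apply]
      rw [Real.norm_eq_abs, abs_of_nonneg (norm_nonneg _)]
      have h1 := hgradsq (x t ω)
      have h2 := hmin (x t ω)
      nlinarith [sq_nonneg (‖F' (x t ω)‖ - 1), norm_nonneg (F' (x t ω)), hβ]
  have intY : ∀ i, Integrable (Y i) P := by
    intro i
    apply Integrable.sub
    · apply Integrable.const_mul
      apply Integrable.mono' intnormF' ((hproj i).comp (hF'm.comp (hx t))).aestronglyMeasurable
      filter_upwards with ω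
      exact abs_coord_le_norm (F' (x t ω)) i
    · have intXi : Integrable (fun ω => x t ω i) P := by
        apply Integrable.mono' (intnormx.add (integrable_const ‖xstar‖))
          ((hproj i).comp (hx t)).aestronglyMeasurable
        filter_upwards with ω
        simp only [Pi.add_apply]
        calc ‖x t ω i‖ = |(x t ω - xstar) i + xstar i| := by
              simp [PiLp.sub_apply, Real.norm_eq_abs]
          _ ≤ |(x t ω - xstar) i| + |xstar i| := abs_add_le _ _
          _ ≤ ‖x t ω - xstar‖ + ‖xstar‖ :=
              add_le_add (abs_coord_le_norm _ i) (abs_coord_le_norm _ i)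
      exact intXi.sub (integrable_const _)
  -- independence
  have hIndepZY : ∀ i, IndepFun (Z i) (Y i) P := by
    intro i
    have h := ((hindep t).symm).comp (hproj i)
      (show Measurable fun y : EuclideanSpace ℝ (Fin p) =>
          (1 / β) * F' y i - (y i - xstar i) from
        (((hproj i).comp hF'm).const_mul (1 / β)).sub ((hproj i).sub_const _))
    exact h
  have intZY : ∀ i, Integrable (fun ω => Z i ω * Y i ω) P := by
    intro i
    exact (hIndepZY i).integrable_mul (intZ i) (intY i)
  have hEZY : ∀ i, ∫ ω, Z i ω * Y i ω ∂P = 0 := by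
    intro i
    have h := (hIndepZY i).integral_mul_eq_mul_integral (mZ i).aestronglyMeasurable
      (mY i).aestronglyMeasurable
    calc ∫ ω, Z i ω * Y i ω ∂P = (∫ ω, Z i ω ∂P) * ∫ ω, Y i ω ∂P := h
      _ = 0 := by rw [hEZ i, zero_mul]
  -- the inner-product and norm-square terms
  have heq1 : (fun ω => (inner ℝ (z t ω) ((1 / β) • F' (x t ω) - (x t ω - xstar)) : ℝ))
      = fun ω => ∑ i, Z i ω * Y i ω := by
    funext ω
    rw [PiLp.inner_apply]
    apply Finset.sum_congr rfl
    intro i _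
    simp [RCLike.inner_apply, hZdef, hYdef, PiLp.sub_apply, PiLp.smul_apply, smul_eq_mul]
    ring
  have heq2 : (fun ω => ‖z t ω‖ ^ 2) = fun ω => ∑ i, Z i ω ^ 2 := by
    funext ω
    rw [← real_inner_self_eq_norm_sq, PiLp.inner_apply]
    apply Finset.sum_congr rfl
    intro i _
    simp [RCLike.inner_apply, hZdef, sq]
  have intG1 : Integrable
      (fun ω => (inner ℝ (z t ω) ((1 / β) • F' (x t ω) - (x t ω - xstar)) : ℝ)) P := by
    rw [heq1]
    exact integrable_finset_sum _ fun i _ => intZY i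
  have hEG1 : ∫ ω, (inner ℝ (z t ω) ((1 / β) • F' (x t ω) - (x t ω - xstar)) : ℝ) ∂P = 0 := by
    rw [heq1, integral_finset_sum _ fun i _ => intZY i]
    simp [hEZY]
  have intG2 : Integrable (fun ω => ‖z t ω‖ ^ 2) P := by
    rw [heq2]
    exact integrable_finset_sum _ fun i _ => intZ2 i
  have hEG2 : ∫ ω, ‖z t ω‖ ^ 2 ∂P = p * σ ^ 2 := by
    rw [heq2, integral_finset_sum _ fun i _ => intZ2 i]
    simp [hEZ2, Finset.sum_const]
  -- pointwise inequality
  have hgradineq := grad_convex_ineq hdiff hconv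
  have hpt : ∀ ω, F (x (t + 1) ω) - F xstar ≤
      β / 2 * (‖x t ω - xstar‖ ^ 2 - ‖x (t + 1) ω - xstar‖ ^ 2)
        + (inner ℝ (z t ω) ((1 / β) • F' (x t ω) - (x t ω - xstar)) : ℝ)
        + (1 / β) * ‖z t ω‖ ^ 2 := by
    intro ω
    rw [hupdate t ω]
    exact pointwise_ineq hβ hsmooth hgradineq xstar (x t ω) (z t ω)
  -- integrate
  have intL : Integrable (fun ω => F (x (t + 1) ω) - F xstar) P :=
    (hint2 (t + 1)).sub (integrable_const _)
  have intA : Integrable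
      (fun ω => β / 2 * (‖x t ω - xstar‖ ^ 2 - ‖x (t + 1) ω - xstar‖ ^ 2)) P :=
    ((hint1 t).sub (hint1 (t + 1))).const_mul _
  have intR : Integrable (fun ω =>
      β / 2 * (‖x t ω - xstar‖ ^ 2 - ‖x (t + 1) ω - xstar‖ ^ 2)
        + (inner ℝ (z t ω) ((1 / β) • F' (x t ω) - (x t ω - xstar)) : ℝ)
        + (1 / β) * ‖z t ω‖ ^ 2) P :=
    (intA.add intG1).add (intG2.const_mul _)
  have hle := integral_mono intL intR hpt
  calc (∫ ω, (F (x (t + 1) ω) - F xstar) ∂P) ≤ _ := hle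
    _ = (∫ ω, β / 2 * (‖x t ω - xstar‖ ^ 2 - ‖x (t + 1) ω - xstar‖ ^ 2) ∂P)
        + (∫ ω, (inner ℝ (z t ω) ((1 / β) • F' (x t ω) - (x t ω - xstar)) : ℝ) ∂P)
        + ∫ ω, (1 / β) * ‖z t ω‖ ^ 2 ∂P := by
      have intAB : Integrable (fun ω =>
          β / 2 * (‖x t ω - xstar‖ ^ 2 - ‖x (t + 1) ω - xstar‖ ^ 2)
            + (inner ℝ (z t ω) ((1 / β) • F' (x t ω) - (x t ω - xstar)) : ℝ)) P :=
        intA.add intG1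
      have intC : Integrable (fun ω => (1 / β) * ‖z t ω‖ ^ 2) P := intG2.const_mul _
      rw [integral_add intAB intC, integral_add intA intG1]
    _ = β / 2 * ((∫ ω, ‖x t ω - xstar‖ ^ 2 ∂P) - ∫ ω, ‖x (t + 1) ω - xstar‖ ^ 2 ∂P)
        + (1 / β) * p * σ ^ 2 := by
      rw [hEG1, integral_const_mul, integral_const_mul, hEG2,
        integral_sub (hint1 t) (hint1 (t + 1))]
      ring
end
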